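/- Let n = 2k+1 ≥ 3 be odd and B(α,β) = αβ² on F_{2^n}. Then B has the injective hyperplane property: for each α ≠ 0 the range of L_α(β) = αβ² - α²β is a hyperplane in F_{2^n}, and the assignment α ↦ ran(L_α) is injective on nonzero elements. -/

import Mathlib

section SuzukiAux

variable {F : Type*} [Field F] [Fintype F]

/-- The map `L_α` as an additive monoid hom (in characteristic 2). -/
private def suzukiL (h2 : (2 : F) = 0) (α : F) : F →+ F :=
  AddMonoidHom.mk' (fun x => α * x ^ 2 - α ^ 2 * x) (by
    intro x y
    linear_combination α * x * y * h2)

private lemma suzukiL_apply (h2 : (2 : F) = 0) (α x : F) :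
    suzukiL h2 α x = α * x ^ 2 - α ^ 2 * x := rfl

private lemma suzukiL_card (h2 : (2 : F) = 0) {n : ℕ} (hn1 : 1 ≤ n)
    (hcard : Fintype.card F = 2 ^ n) {α : F} (hα : α ≠ 0) :
    Nat.card (suzukiL h2 α).range = 2 ^ (n - 1) := by
  have hker : ((suzukiL h2 α).ker : Set F) = {0, α} := by
    ext x
    simp only [SetLike.mem_coe, AddMonoidHom.mem_ker, suzukiL_apply,
      Set.mem_insert_iff, Set.mem_singleton_iff]
    constructor
    · intro hx
      have hfac : α * x * (x - α) = 0 := by linear_combination hx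
      rcases mul_eq_zero.mp hfac with h | h
      · rcases mul_eq_zero.mp h with h | h
        · exact absurd h hα
        · exact Or.inl h
      · exact Or.inr (sub_eq_zero.mp h)
    · rintro (rfl | rfl) <;> ring
  have hkcard : Nat.card (suzukiL h2 α).ker = 2 := by
    have hk2 : Nat.card ((suzukiL h2 α).ker : Set F) = 2 := by
      rw [Nat.card_congr (Equiv.setCongr hker), Nat.card_coe_set_eq,
        Set.ncard_pair (Ne.symm hα)]
    simpa using hk2
  have hiso : Nat.card (F ⧸ (suzukiL h2 α).ker) = Nat.card (suzukiL h2 α).range :=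
    Nat.card_congr (QuotientAddGroup.quotientKerEquivRange (suzukiL h2 α)).toEquiv
  have htot : Nat.card F = Nat.card (F ⧸ (suzukiL h2 α).ker) * Nat.card (suzukiL h2 α).ker :=
    AddSubgroup.card_eq_card_quotient_mul_card_addSubgroup _
  rw [hiso, hkcard, Nat.card_eq_fintype_card, hcard] at htot
  have hpow : 2 ^ n = 2 ^ (n - 1) * 2 := by
    rw [← pow_succ]
    congr 1
    omega
  omega

end SuzukiAux

/-- **Injective hyperplane property** for `B(α,β) = αβ²` on `F = 𝔽_{2^n}`,
`n = 2k+1 ≥ 3` odd: for each `α ≠ 0` the range of `L_α(β) = αβ² - α²β` is a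
hyperplane (an `𝔽₂`-subspace — equivalently, since `char F = 2`, an additive
subgroup — of cardinality `2^{n-1}`, i.e. codimension 1), and `α ↦ ran L_α` is
injective on nonzero elements. -/
theorem suzuki_IHP (F : Type*) [Field F] [Fintype F] (n k : ℕ)
    (hn : n = 2 * k + 1) (h3 : 3 ≤ n) (hcard : Fintype.card F = 2 ^ n) :
    (∀ α : F, α ≠ 0 →
      ∃ S : AddSubgroup F,
        (S : Set F) = Set.range (fun β : F => α * β ^ 2 - α ^ 2 * β) ∧
        Nat.card S = 2 ^ (n - 1)) ∧
    (∀ α β : F, α ≠ 0 → β ≠ 0 →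
      Set.range (fun x : F => α * x ^ 2 - α ^ 2 * x) =
        Set.range (fun x : F => β * x ^ 2 - β ^ 2 * x) → α = β) := by
  classical
  have hn1 : 1 ≤ n := by omega
  -- characteristic 2
  have h2 : (2 : F) = 0 := by
    have hz : ((Fintype.card F : ℕ) : F) = 0 := FiniteField.cast_card_eq_zero F
    rw [hcard] at hz
    push_cast at hz
    exact pow_eq_zero_iff (by omega) |>.mp hz
  constructor
  · -- hyperplane part
    intro α hα
    refine ⟨(suzukiL h2 α).range, ?_, suzukiL_card h2 hn1 hcard hα⟩
    rw [AddMonoidHom.coe_range]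
    rfl
  · -- injectivity part
    intro α β hα hβ hr
    -- the Artin–Schreier set
    set Tset : Set F := Set.range (fun x : F => x ^ 2 - x) with hTdef
    have hTzero : (0 : F) ∈ Tset := ⟨0, by ring⟩
    have hTadd : ∀ a ∈ Tset, ∀ b ∈ Tset, a + b ∈ Tset := by
      rintro a ⟨x, rfl⟩ b ⟨y, rfl⟩
      exact ⟨x + y, by simp only; linear_combination x * y * h2⟩
    have hneg : ∀ a : F, -a = a := by
      intro a
      linear_combination (-a) * h2
    -- range of L_γ is γ³ • Tset
    have range_eq : ∀ γ : F, γ ≠ 0 →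
        Set.range (fun x : F => γ * x ^ 2 - γ ^ 2 * x) = (fun t => γ ^ 3 * t) '' Tset := by
      intro γ hγ
      ext y
      constructor
      · rintro ⟨x, rfl⟩
        exact ⟨(x * γ⁻¹) ^ 2 - x * γ⁻¹, ⟨x * γ⁻¹, rfl⟩, by field_simp⟩
      · rintro ⟨t, ⟨x, rfl⟩, rfl⟩
        exact ⟨γ * x, by ring⟩
    have himg : (fun t => α ^ 3 * t) '' Tset = (fun t => β ^ 3 * t) '' Tset := by
      rw [← range_eq α hα, ← range_eq β hβ, hr]
    have hα3 : α ^ 3 ≠ 0 := pow_ne_zero _ hα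
    have hβ3 : β ^ 3 ≠ 0 := pow_ne_zero _ hβ
    set c : F := α ^ 3 * (β ^ 3)⁻¹ with hcdef
    have hc0 : c ≠ 0 := mul_ne_zero hα3 (inv_ne_zero hβ3)
    have hc1 : ∀ t ∈ Tset, c * t ∈ Tset := by
      intro t ht
      have h1 : α ^ 3 * t ∈ (fun t => β ^ 3 * t) '' Tset := by
        rw [← himg]; exact ⟨t, ht, rfl⟩
      obtain ⟨s, hs, hse⟩ := h1
      have : c * t = s := by
        rw [hcdef]
        field_simp
        linear_combination -hse
      rw [this]; exact hs
    have hcinv : ∀ t ∈ Tset, c⁻¹ * t ∈ Tset := by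
      intro t ht
      have h1 : β ^ 3 * t ∈ (fun t => α ^ 3 * t) '' Tset := by
        rw [himg]; exact ⟨t, ht, rfl⟩
      obtain ⟨s, hs, hse⟩ := h1
      have : c⁻¹ * t = s := by
        rw [hcdef]
        field_simp
        linear_combination -hse
      rw [this]; exact hs
    -- the multiplier subfield
    let K : Subfield F :=
      { carrier := {a : F | ∀ t ∈ Tset, a * t ∈ Tset}
        mul_mem' := by
          intro a b ha hb t ht
          rw [mul_assoc]
          exact ha _ (hb t ht)
        one_mem' := by
          intro t ht
          rw [one_mul]; exact ht
        add_mem' := by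
          intro a b ha hb t ht
          rw [add_mul]
          exact hTadd _ (ha t ht) _ (hb t ht)
        zero_mem' := by
          intro t ht
          rw [zero_mul]; exact hTzero
        neg_mem' := by
          intro a ha t ht
          rw [neg_mul, hneg]
          exact ha t ht
        inv_mem' := by
          intro a ha t ht
          rcases eq_or_ne a 0 with rfl | ha0
          · rw [inv_zero, zero_mul]; exact hTzero
          · have hfin : Finite Tset := Subtype.finite
            set φ : Tset → Tset := fun s => ⟨a * s.1, ha s.1 s.2⟩ with hφ
            have hinj : Function.Injective φ := by
              intro s₁ s₂ h
              have := congrArg Subtype.val h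
              simp only [hφ] at this
              exact Subtype.ext (mul_left_cancel₀ ha0 this)
            obtain ⟨s, hs⟩ := (Finite.injective_iff_surjective.mp hinj) ⟨t, ht⟩
            have hval : a * s.1 = t := congrArg Subtype.val hs
            rw [← hval, inv_mul_cancel_left₀ ha0]
            exact s.2 }
    have hKmem : ∀ a : F, a ∈ K ↔ ∀ t ∈ Tset, a * t ∈ Tset := fun a => Iff.rfl
    -- Tset is a K-submodule
    let Tsub : Submodule K F :=
      { carrier := Tset
        add_mem' := fun {a b} ha hb => hTadd a ha b hb
        zero_mem' := hTzero
        smul_mem' := by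
          intro kk x hx
          rw [Subring.smul_def]
          exact kk.2 x hx }
    -- cardinalities
    letI : Fintype K := Fintype.ofFinite K
    letI : Fintype Tsub := Fintype.ofFinite Tsub
    have hcardF : Fintype.card F = Fintype.card K ^ Module.finrank K F :=
      Module.card_eq_pow_finrank
    have hcardT : Fintype.card Tsub = Fintype.card K ^ Module.finrank K Tsub :=
      Module.card_eq_pow_finrank
    -- card Tsub = 2^(n-1)
    have hTcard : Fintype.card Tsub = 2 ^ (n - 1) := by
      have hrange : ((suzukiL h2 1).range : Set F) = Tset := by
        rw [AddMonoidHom.coe_range]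
        ext y
        constructor
        · rintro ⟨x, rfl⟩
          exact ⟨x, by rw [suzukiL_apply]; ring⟩
        · rintro ⟨x, rfl⟩
          exact ⟨x, by rw [suzukiL_apply]; ring⟩
      have h1 : Nat.card (suzukiL h2 1).range = 2 ^ (n - 1) :=
        suzukiL_card h2 hn1 hcard one_ne_zero
      have h2' : Nat.card Tsub = Nat.card (suzukiL h2 1).range := by
        exact (Nat.card_congr (Equiv.setCongr hrange)).symm
      rw [← Nat.card_eq_fintype_card, h2', h1]
    -- deduce card K = 2
    have hq2 : 2 ≤ Fintype.card K := Fintype.one_lt_card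
    set q := Fintype.card K with hq
    set d1 := Module.finrank K F with hd1
    set d2 := Module.finrank K Tsub with hd2
    have e1 : q ^ d1 = 2 ^ n := by rw [← hcardF, hcard]
    have e2 : q ^ d2 = 2 ^ (n - 1) := by rw [← hcardT, hTcard]
    have hsplit : 2 ^ n = 2 * 2 ^ (n - 1) := by
      rw [← pow_succ']
      congr 1
      omega
    have hlt : d2 < d1 := by
      have : q ^ d2 < q ^ d1 := by
        rw [e1, e2, hsplit]
        have : 0 < 2 ^ (n - 1) := Nat.pow_pos (by norm_num)
        omega
      exact (Nat.pow_lt_pow_iff_right hq2).mp this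
    have hqd : q ^ (d1 - d2) = 2 := by
      have hmul : q ^ d2 * q ^ (d1 - d2) = q ^ d2 * 2 := by
        rw [← pow_add]
        rw [show d2 + (d1 - d2) = d1 by omega, e1, e2, hsplit]
        ring
      have hpos : 0 < q ^ d2 := Nat.pow_pos (by omega)
      exact Nat.eq_of_mul_eq_mul_left hpos hmul
    have hqeq : q = 2 := by
      have hdvd : q ∣ 2 := by
        rw [← hqd]
        exact dvd_pow_self q (by omega)
      have := Nat.le_of_dvd (by norm_num) hdvd
      omega
    -- c ∈ K and K has two elements ⇒ c = 1
    have hcK : c ∈ K := (hKmem c).mpr hc1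
    have hcsq : c ^ 2 = c := by
      have := FiniteField.pow_card (⟨c, hcK⟩ : K)
      rw [← hq, hqeq] at this
      simpa using congrArg Subtype.val this
    have hc_one : c = 1 := by
      have hfac : c * (c - 1) = 0 := by linear_combination hcsq
      rcases mul_eq_zero.mp hfac with h | h
      · exact absurd h hc0
      · exact sub_eq_zero.mp h
    -- α³ = β³
    have hcube : α ^ 3 = β ^ 3 := by
      have : α ^ 3 * (β ^ 3)⁻¹ = 1 := hc_one
      field_simp at this
      exact this
    -- cubing is injective since gcd(3, 2^n - 1) = 1
    have hpow3 : ∀ m : ℕ, 2 ^ (2 * m + 1) % 3 = 2 := by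
      intro m
      induction m with
      | zero => rfl
      | succ m ih =>
        have h : 2 * (m + 1) + 1 = (2 * m + 1) + 2 := by ring
        rw [h, pow_add]
        have h4 : (2 : ℕ) ^ 2 = 4 := rfl
        rw [h4]
        omega
    have hmod : 2 ^ n % 3 = 2 := by rw [hn]; exact hpow3 k
    have hge : 2 ≤ 2 ^ n := by
      calc 2 = 2 ^ 1 := (pow_one 2).symm
      _ ≤ 2 ^ n := Nat.pow_le_pow_right (by norm_num) hn1
    -- pass to units
    set u : Fˣ := Units.mk0 (α * β⁻¹) (mul_ne_zero hα (inv_ne_zero hβ)) with hu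
    have hu3 : u ^ 3 = 1 := by
      ext
      push_cast [hu, Units.val_mk0]
      field_simp
      linear_combination hcube
    have hdvd3 : orderOf u ∣ 3 := orderOf_dvd_of_pow_eq_one hu3
    have hdvdcard : orderOf u ∣ 2 ^ n - 1 := by
      have := orderOf_dvd_card (x := u)
      rwa [Fintype.card_units, hcard] at this
    have hord1 : orderOf u = 1 := by
      rcases (Nat.prime_three).eq_one_or_self_of_dvd (orderOf u) hdvd3 with h | h
      · exact h
      · exfalso
        rw [h] at hdvdcard
        omega
    have huone : u = 1 := orderOf_eq_one_iff.mp hord1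
    have : α * β⁻¹ = 1 := by
      have := congrArg Units.val huone
      simpa [hu] using this
    field_simp at this
    exact this
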